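/- Fix integers M ≥ N ≥ 1, parameters t, α₁,…,α_M, γ₁,…,γ_M ∈ ℂ with t ≠ 0, an element s ∈ ℂ with s² = −t, and integers 1 ≤ x̄₁ < ⋯ < x̄_N = M. For nonzero z₁,…,z_N ∈ ℂ with t²z_j² ≠ 1 for all j, t²z_jz_k ≠ 1 and z_j ≠ z_k for all j < k, and fixed w₁,…,w_N ∈ ℂ with w_j² = z_j, define F̄^{II}_{M,N}(z₁,…,z_N; γ₁,…,γ_M; x̄₁,…,x̄_N) = [ t^{N(M-N)+N(N+1)/2} ∏_{j=1}^{N} w_j(1−s z_j) ∏_{1≤j<k≤N}(1+tz_jz_k)(1+tz_j^{-1}z_k) ] / [ (−1)^N ∏_{j=1}^{N}(1−t²z_j²) ∏_{1≤j<k≤N}(1−t²z_jz_k)(1−z_j^{-1}z_k) ] × Σ_{σ ∈ S_N} Σ_{τ ∈ {±1}^N} sgn(σ) (−1)^{#{j : τ_j = −1}} ∏_{j=1}^{N} ( (t z_{σ(j)})^{τ_{σ(j)}} − s ) · ∏_{j=1}^{N} [ ∏_{k=1}^{x̄_j-1}(−α_k + (1-α_kγ_k)(t z_{σ(j)})^{τ_{σ(j)}})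 ] [ ∏_{k=x̄_j+1}^{M}(1 + γ_k (t z_{σ(j)})^{τ_{σ(j)}}) ] [ ∏_{k=1}^{M}(1 + γ_k (t z_{σ(j)})^{-τ_{σ(j)}}) ]. Then, with γ_M specialized to γ_M = −(t z_N)^{-1}, F̄^{II}_{M,N}(z₁,…,z_N; γ₁,…,γ_{M-1}, −(t z_N)^{-1}; x̄₁,…,x̄_N) = −s w_N · ∏_{j=1}^{N}(1 + (t z_N z_j)^{-1}) · ∏_{j=1}^{N-1}(1 + z_j (t z_N)^{-1}) · ∏_{j=1}^{M-1}(t(1-α_jγ_j) z_N − α_j) · ∏_{j=1}^{M-1}(t + γ_j z_N^{-1}) · F̄^{II}_{M-1,N-1}(z₁,…,z_{N-1}; γ₁,…,γ_{M-1}; x̄₁,…,x̄_{N-1}), where F̄^{II}_{M-1,0} is interpreted as 1. -/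

import Mathlib

open Finset

/-- The reindexed explicit sum formula `F̄^{II}_{M,N}` (equation (127) in the Appendix of
the paper): the product of the type II dual prefactor and the generalized
Bump–Friedberg–Hoffstein Whittaker function `o^-_{λ̄}(tz₁,…,tz_N | −α | −γ | t)` with
`λ̄_j = x̄_{N-j+1} - N + j - 1`.  Here `s` plays the role of `√(-t)` and `w j` that of
`z_j^{1/2}`.  Variables `z`, square roots `w` and hole positions `x̄` are 0-indexed;
parameter families `α, γ` are functions on `ℕ` (indices `1,…,M` are used).  The sign
choice `τ` is encoded by booleans: `τ j = true` stands for `τ_j = +1`, `τ j = false`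
for `τ_j = -1`. -/
noncomputable def FIIbar (M : ℕ) (t s : ℂ) (α γ : ℕ → ℂ) {N : ℕ} (x : Fin N → ℕ)
    (z w : Fin N → ℂ) : ℂ :=
  (t ^ (N * (M - N) + N * (N + 1) / 2) * (∏ j, w j * (1 - s * z j)) *
      ∏ j, ∏ k ∈ Ioi j, (1 + t * z j * z k) * (1 + t * (z j)⁻¹ * z k)) /
  ((-1 : ℂ) ^ N * (∏ j, (1 - t ^ 2 * z j ^ 2)) *
      ∏ j, ∏ k ∈ Ioi j, (1 - t ^ 2 * z j * z k) * (1 - (z j)⁻¹ * z k)) *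
  ∑ σ : Equiv.Perm (Fin N), ∑ τ : Fin N → Bool,
    ((Equiv.Perm.sign σ : ℤ) : ℂ) *
    (-1 : ℂ) ^ (Finset.univ.filter (fun j => τ j = false)).card *
    (∏ j, ((if τ (σ j) then t * z (σ j) else (t * z (σ j))⁻¹) - s)) *
    ∏ j,
      ((∏ k ∈ Finset.Icc 1 (x j - 1),
          (-α k + (1 - α k * γ k) * (if τ (σ j) then t * z (σ j) else (t * z (σ j))⁻¹))) *
       (∏ k ∈ Finset.Icc (x j + 1) M,
          (1 + γ k * (if τ (σ j) then t * z (σ j) else (t * z (σ j))⁻¹))) *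
       (∏ k ∈ Finset.Icc 1 M,
          (1 + γ k * (if τ (σ j) then (t * z (σ j))⁻¹ else t * z (σ j)))))


lemma prod_Ioi_castSucc {n : ℕ} (g : Fin (n + 1) → ℂ) (j : Fin n) :
    ∏ k ∈ Ioi (Fin.castSucc j), g k = (∏ k ∈ Ioi j, g (Fin.castSucc k)) * g (Fin.last n) := by
  have h1 : (Ioi (Fin.castSucc j) : Finset (Fin (n + 1)))
      = insert (Fin.last n) ((Ioi j).image Fin.castSucc) := by
    ext k
    simp only [mem_Ioi, mem_insert, mem_image]
    constructor
    · intro hk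
      rcases Fin.eq_castSucc_or_eq_last k with ⟨i, rfl⟩ | rfl
      · exact Or.inr ⟨i, Fin.castSucc_lt_castSucc_iff.mp hk, rfl⟩
      · exact Or.inl rfl
    · rintro (rfl | ⟨i, hi, rfl⟩)
      · exact Fin.castSucc_lt_last j
      · exact Fin.castSucc_lt_castSucc_iff.mpr hi
  have h2 : Fin.last n ∉ (Ioi j).image Fin.castSucc := by
    simp only [mem_image, not_exists]
    intro i hi
    exact absurd hi.2 (Fin.castSucc_lt_last i).ne
  rw [h1, Finset.prod_insert h2,
    Finset.prod_image (fun a _ b _ h => Fin.castSucc_injective n h), mul_comm]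

lemma prod_prod_Ioi_castSucc {n : ℕ} (f : Fin (n + 1) → Fin (n + 1) → ℂ) :
    ∏ j, ∏ k ∈ Ioi j, f j k =
      (∏ j : Fin n, ∏ k ∈ Ioi j, f j.castSucc k.castSucc) *
        ∏ j : Fin n, f j.castSucc (Fin.last n) := by
  rw [Fin.prod_univ_castSucc]
  have hlast : (Ioi (Fin.last n) : Finset (Fin (n + 1))) = ∅ :=
    Finset.eq_empty_of_forall_notMem fun k hk =>
      absurd (Finset.mem_Ioi.mp hk) (Fin.le_last k).not_gt
  rw [hlast, Finset.prod_empty, mul_one, ← Finset.prod_mul_distrib]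
  exact Finset.prod_congr rfl fun j _ => prod_Ioi_castSucc (f j.castSucc) j

lemma exp_split {m n : ℕ} (h : n ≤ m) :
    (n + 1) * ((m + 1) - (n + 1)) + (n + 1) * ((n + 1) + 1) / 2
      = (n * (m - n) + n * (n + 1) / 2) + (m + 1) := by
  have h1 : (m + 1) - (n + 1) = m - n := by omega
  have h2 : (n + 1) * ((n + 1) + 1) = n * (n + 1) + 2 * (n + 1) := by ring
  have h3 : (n + 1) * (m - n) = n * (m - n) + (m - n) := by ring
  rw [h1]
  omega

noncomputable def IKterm (M : ℕ) (t s : ℂ) (α γ : ℕ → ℂ) {N : ℕ} (x : Fin N → ℕ)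
    (z : Fin N → ℂ) (σ : Equiv.Perm (Fin N)) (τ : Fin N → Bool) : ℂ :=
  ((Equiv.Perm.sign σ : ℤ) : ℂ) *
    (-1 : ℂ) ^ (Finset.univ.filter (fun j => τ j = false)).card *
    (∏ j, ((if τ (σ j) then t * z (σ j) else (t * z (σ j))⁻¹) - s)) *
    ∏ j,
      ((∏ k ∈ Finset.Icc 1 (x j - 1),
          (-α k + (1 - α k * γ k) * (if τ (σ j) then t * z (σ j) else (t * z (σ j))⁻¹))) *
       (∏ k ∈ Finset.Icc (x j + 1) M,
          (1 + γ k * (if τ (σ j) then t * z (σ j) else (t * z (σ j))⁻¹))) *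
       (∏ k ∈ Finset.Icc 1 M,
          (1 + γ k * (if τ (σ j) then (t * z (σ j))⁻¹ else t * z (σ j)))))

lemma IK_sum_red (m n : ℕ) (t s : ℂ) (ht : t ≠ 0) (α γ : ℕ → ℂ)
    (x : Fin (n + 1) → ℕ) (hx : StrictMono x) (hxM : x (Fin.last n) = m + 1)
    (z : Fin (n + 1) → ℂ) (hz0 : ∀ j, z j ≠ 0) :
    (∑ σ : Equiv.Perm (Fin (n + 1)), ∑ τ : Fin (n + 1) → Bool,
        IKterm (m + 1) t s α (Function.update γ (m + 1) (-(t * z (Fin.last n))⁻¹)) x z σ τ)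
      = ((t * z (Fin.last n) - s) *
          (∏ k ∈ Finset.Icc 1 m, (-α k + (1 - α k * γ k) * (t * z (Fin.last n)))) *
          ((∏ k ∈ Finset.Icc 1 m, (1 + γ k * (t * z (Fin.last n))⁻¹)) *
            (1 + -(t * z (Fin.last n))⁻¹ * (t * z (Fin.last n))⁻¹)) *
          ∏ i : Fin n, ((1 + -(t * z (Fin.last n))⁻¹ * (t * z i.castSucc)) *
            (1 + -(t * z (Fin.last n))⁻¹ * (t * z i.castSucc)⁻¹))) *
        ∑ σ : Equiv.Perm (Fin n), ∑ τ : Fin n → Bool,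
          IKterm m t s α γ (fun j => x j.castSucc) (fun j => z j.castSucc) σ τ := by
  classical
  have htzL : t * z (Fin.last n) ≠ 0 := mul_ne_zero ht (hz0 _)
  set c : ℂ := -(t * z (Fin.last n))⁻¹ with hc
  set γ' : ℕ → ℂ := Function.update γ (m + 1) c with hγ'
  have hγ'top : γ' (m + 1) = c := Function.update_self _ _ _
  have hγ'ne : ∀ k, k ≠ m + 1 → γ' k = γ k := fun k hk => Function.update_of_ne hk _ _
  have hczL : 1 + c * (t * z (Fin.last n)) = 0 := by
    rw [hc]; field_simp; rw [div_self (hz0 _)]; ring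
  have hxm : ∀ j : Fin n, x j.castSucc ≤ m := by
    intro j
    have h := hx (Fin.castSucc_lt_last j)
    rw [hxM] at h; omega
  -- vanishing lemma
  have hvan : ∀ (σ : Equiv.Perm (Fin (n + 1))) (τ : Fin (n + 1) → Bool),
      σ (Fin.last n) ≠ Fin.last n ∨ τ (Fin.last n) = false →
      IKterm (m + 1) t s α γ' x z σ τ = 0 := by
    intro σ τ h
    have hmem1 : m + 1 ∈ Finset.Icc 1 (m + 1) := by simp
    unfold IKterm
    rw [mul_eq_zero]; right
    refine Finset.prod_eq_zero (Finset.mem_univ (σ.symm (Fin.last n))) ?_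
    by_cases hτ : τ (Fin.last n) = false
    · rw [mul_eq_zero]; right
      refine Finset.prod_eq_zero hmem1 ?_
      rw [Equiv.apply_symm_apply, hτ]
      simpa [hγ'top] using hczL
    · have hτ' : τ (Fin.last n) = true := by simpa using hτ
      have hne : σ.symm (Fin.last n) ≠ Fin.last n := by
        rcases h with h | h
        · intro hh
          have h2 := congrArg σ hh
          rw [Equiv.apply_symm_apply] at h2
          exact h h2.symm
        · exact absurd h hτ
      rw [mul_eq_zero]; left; rw [mul_eq_zero]; right
      have hmem2 : m + 1 ∈ Finset.Icc (x (σ.symm (Fin.last n)) + 1) (m + 1) := by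
        have h1 : σ.symm (Fin.last n) < Fin.last n :=
          lt_of_le_of_ne (Fin.le_last _) hne
        have h2 := hx h1
        rw [hxM] at h2
        simp only [Finset.mem_Icc]; omega
      refine Finset.prod_eq_zero hmem2 ?_
      rw [Equiv.apply_symm_apply, hτ']
      simpa [hγ'top] using hczL
  -- reindexing equivalence for permutations
  set e2 : (Option (Fin n) × Equiv.Perm (Fin n)) ≃ Equiv.Perm (Fin (n + 1)) :=
    Equiv.Perm.decomposeOption.symm.trans finSuccEquivLast.symm.permCongr with he2
  have he2apply : ∀ (o : Option (Fin n)) (σ : Equiv.Perm (Fin n)) (i : Fin (n + 1)),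
      e2 (o, σ) i
        = finSuccEquivLast.symm ((Equiv.swap none o) (Option.map σ (finSuccEquivLast i))) := by
    intro o σ i
    simp [he2, Equiv.permCongr_apply, Equiv.Perm.decomposeOption_symm_apply,
      Equiv.Perm.mul_apply, Equiv.optionCongr_apply]
  have hlift1 : ∀ (σ : Equiv.Perm (Fin n)) (j : Fin n),
      e2 (none, σ) j.castSucc = (σ j).castSucc := by
    intro σ j
    rw [he2apply]
    simp [Equiv.swap_self]
  have hlift2 : ∀ σ : Equiv.Perm (Fin n), e2 (none, σ) (Fin.last n) = Fin.last n := by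
    intro σ
    rw [he2apply]
    simp [Equiv.swap_self]
  have hlift3 : ∀ (i : Fin n) (σ : Equiv.Perm (Fin n)),
      e2 (some i, σ) (Fin.last n) ≠ Fin.last n := by
    intro i σ
    rw [he2apply]
    simp only [finSuccEquivLast_last, Option.map_none, Equiv.swap_apply_left,
      finSuccEquivLast_symm_some]
    exact (Fin.castSucc_lt_last i).ne
  have hsign : ∀ σ : Equiv.Perm (Fin n),
      Equiv.Perm.sign (e2 (none, σ)) = Equiv.Perm.sign σ := by
    intro σ
    simp [he2, Equiv.Perm.sign_permCongr, Equiv.Perm.decomposeOption_symm_sign]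
  -- reindex the permutation sum
  rw [← Equiv.sum_comp e2
    (fun σ => ∑ τ : Fin (n + 1) → Bool, IKterm (m + 1) t s α γ' x z σ τ),
    Fintype.sum_prod_type, Fintype.sum_option]
  have h0 : (∑ a : Fin n, ∑ σ' : Equiv.Perm (Fin n), ∑ τ : Fin (n + 1) → Bool,
      IKterm (m + 1) t s α γ' x z (e2 (some a, σ')) τ) = 0 := by
    refine Finset.sum_eq_zero fun a _ => Finset.sum_eq_zero fun σ' _ =>
      Finset.sum_eq_zero fun τ _ => hvan _ _ (Or.inl (hlift3 a σ'))
  rw [h0, add_zero]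
  -- reindex each τ-sum
  have hτsum : ∀ σ' : Equiv.Perm (Fin n),
      (∑ τ : Fin (n + 1) → Bool, IKterm (m + 1) t s α γ' x z (e2 (none, σ')) τ)
        = ∑ τ' : Fin n → Bool,
            IKterm (m + 1) t s α γ' x z (e2 (none, σ')) ((Fin.last n).insertNth true τ') := by
    intro σ'
    rw [← Equiv.sum_comp (Fin.insertNthEquiv (fun _ => Bool) (Fin.last n))
      (fun τ => IKterm (m + 1) t s α γ' x z (e2 (none, σ')) τ),
      Fintype.sum_prod_type, Fintype.sum_bool]
    have hfalse : (∑ τ' : Fin n → Bool,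
        IKterm (m + 1) t s α γ' x z (e2 (none, σ'))
          ((Fin.insertNthEquiv (fun _ => Bool) (Fin.last n)) (false, τ'))) = 0 := by
      refine Finset.sum_eq_zero fun τ' _ => hvan _ _ (Or.inr ?_)
      rw [Fin.insertNthEquiv_apply]
      exact Fin.insertNth_apply_same _ _ _
    rw [hfalse, add_zero]
    refine Finset.sum_congr rfl fun τ' _ =>
      congrArg _ (funext fun j => Fin.insertNthEquiv_apply _ _ _ _)
  -- termwise identity
  have hAeq : ∀ (j : Fin n) (u : ℂ),
      (∏ k ∈ Finset.Icc 1 (x j.castSucc - 1), (-α k + (1 - α k * γ' k) * u))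
        = ∏ k ∈ Finset.Icc 1 (x j.castSucc - 1), (-α k + (1 - α k * γ k) * u) := by
    intro j u
    refine Finset.prod_congr rfl fun k hk => ?_
    have hk' := Finset.mem_Icc.mp hk
    have := hxm j
    rw [hγ'ne k (by omega)]
  have hB : ∀ (j : Fin n) (u : ℂ),
      (∏ k ∈ Finset.Icc (x j.castSucc + 1) (m + 1), (1 + γ' k * u))
        = (∏ k ∈ Finset.Icc (x j.castSucc + 1) m, (1 + γ k * u)) * (1 + c * u) := by
    intro j u
    rw [Finset.prod_Icc_succ_top (by have := hxm j; omega), hγ'top]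
    congr 1
    refine Finset.prod_congr rfl fun k hk => ?_
    have hk' := Finset.mem_Icc.mp hk
    rw [hγ'ne k (by omega)]
  have hCeq : ∀ u : ℂ,
      (∏ k ∈ Finset.Icc 1 (m + 1), (1 + γ' k * u))
        = (∏ k ∈ Finset.Icc 1 m, (1 + γ k * u)) * (1 + c * u) := by
    intro u
    rw [Finset.prod_Icc_succ_top (by omega), hγ'top]
    congr 1
    refine Finset.prod_congr rfl fun k hk => ?_
    have hk' := Finset.mem_Icc.mp hk
    rw [hγ'ne k (by omega)]
  have hAm : ∀ u : ℂ,
      (∏ k ∈ Finset.Icc 1 m, (-α k + (1 - α k * γ' k) * u))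
        = ∏ k ∈ Finset.Icc 1 m, (-α k + (1 - α k * γ k) * u) := by
    intro u
    refine Finset.prod_congr rfl fun k hk => ?_
    have hk' := Finset.mem_Icc.mp hk
    rw [hγ'ne k (by omega)]
  have hterm : ∀ (σ' : Equiv.Perm (Fin n)) (τ' : Fin n → Bool),
      IKterm (m + 1) t s α γ' x z (e2 (none, σ')) ((Fin.last n).insertNth true τ')
        = ((t * z (Fin.last n) - s) *
            (∏ k ∈ Finset.Icc 1 m, (-α k + (1 - α k * γ k) * (t * z (Fin.last n)))) *
            ((∏ k ∈ Finset.Icc 1 m, (1 + γ k * (t * z (Fin.last n))⁻¹)) *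
              (1 + c * (t * z (Fin.last n))⁻¹)) *
            ∏ i : Fin n, ((1 + c * (t * z i.castSucc)) * (1 + c * (t * z i.castSucc)⁻¹))) *
          IKterm m t s α γ (fun j => x j.castSucc) (fun j => z j.castSucc) σ' τ' := by
    intro σ' τ'
    have hτc : ∀ j : Fin n,
        Fin.insertNth (α := fun _ => Bool) (Fin.last n) true τ' j.castSucc = τ' j := by
      intro j
      rw [← Fin.succAbove_last, Fin.insertNth_apply_succAbove]
    have hτL : Fin.insertNth (α := fun _ => Bool) (Fin.last n) true τ' (Fin.last n) = true :=
      Fin.insertNth_apply_same _ _ _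
    have hcard : (Finset.univ.filter
          (fun j : Fin (n + 1) =>
            Fin.insertNth (α := fun _ => Bool) (Fin.last n) true τ' j = false)).card
        = (Finset.univ.filter (fun j : Fin n => τ' j = false)).card := by
      rw [Finset.card_filter, Finset.card_filter, Fin.sum_univ_castSucc]
      simp [hτc, hτL]
    unfold IKterm
    beta_reduce
    rw [hcard]
    simp only [Fin.prod_univ_castSucc]
    simp only [hlift1, hlift2, hτc, hτL, eq_self_iff_true, if_true, hsign σ']
    simp only [hxM, Nat.add_sub_cancel, hAeq, hAm, hB, hCeq]
    rw [show Finset.Icc (m + 1 + 1) (m + 1) = (∅ : Finset ℕ) from Finset.Icc_eq_empty (by omega),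
      Finset.prod_empty]
    -- pull the extra factors out of the j-product
    have hpull : (∏ j : Fin n,
        ((∏ k ∈ Finset.Icc 1 (x j.castSucc - 1),
            (-α k + (1 - α k * γ k) *
              (if τ' (σ' j) then t * z (σ' j).castSucc else (t * z (σ' j).castSucc)⁻¹))) *
          ((∏ k ∈ Finset.Icc (x j.castSucc + 1) m,
            (1 + γ k *
              (if τ' (σ' j) then t * z (σ' j).castSucc else (t * z (σ' j).castSucc)⁻¹))) *
            (1 + c * (if τ' (σ' j) then t * z (σ' j).castSucc else (t * z (σ' j).castSucc)⁻¹))) *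
          ((∏ k ∈ Finset.Icc 1 m,
            (1 + γ k *
              (if τ' (σ' j) then (t * z (σ' j).castSucc)⁻¹ else t * z (σ' j).castSucc))) *
            (1 + c * (if τ' (σ' j) then (t * z (σ' j).castSucc)⁻¹ else t * z (σ' j).castSucc)))))
        = (∏ j : Fin n,
            ((∏ k ∈ Finset.Icc 1 (x j.castSucc - 1),
              (-α k + (1 - α k * γ k) *
                (if τ' (σ' j) then t * z (σ' j).castSucc else (t * z (σ' j).castSucc)⁻¹))) *
             (∏ k ∈ Finset.Icc (x j.castSucc + 1) m,
              (1 + γ k *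
                (if τ' (σ' j) then t * z (σ' j).castSucc else (t * z (σ' j).castSucc)⁻¹))) *
             (∏ k ∈ Finset.Icc 1 m,
              (1 + γ k *
                (if τ' (σ' j) then (t * z (σ' j).castSucc)⁻¹ else t * z (σ' j).castSucc))))) *
          ∏ j : Fin n,
            ((1 + c * (if τ' (σ' j) then t * z (σ' j).castSucc else (t * z (σ' j).castSucc)⁻¹)) *
             (1 + c * (if τ' (σ' j) then (t * z (σ' j).castSucc)⁻¹ else t * z (σ' j).castSucc))) := by
      rw [← Finset.prod_mul_distrib]
      exact Finset.prod_congr rfl fun j _ => by ring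
    rw [hpull]
    have hperm : (∏ j : Fin n,
        ((1 + c * (if τ' (σ' j) then t * z (σ' j).castSucc else (t * z (σ' j).castSucc)⁻¹)) *
         (1 + c * (if τ' (σ' j) then (t * z (σ' j).castSucc)⁻¹ else t * z (σ' j).castSucc))))
        = ∏ i : Fin n, ((1 + c * (t * z i.castSucc)) * (1 + c * (t * z i.castSucc)⁻¹)) := by
      rw [Equiv.prod_comp σ' (fun i =>
        (1 + c * (if τ' i then t * z i.castSucc else (t * z i.castSucc)⁻¹)) *
        (1 + c * (if τ' i then (t * z i.castSucc)⁻¹ else t * z i.castSucc)))]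
      refine Finset.prod_congr rfl fun i _ => ?_
      cases hi : τ' i <;> simp [hi, mul_comm]
    rw [hperm]
    ring
  calc (∑ σ' : Equiv.Perm (Fin n), ∑ τ : Fin (n + 1) → Bool,
          IKterm (m + 1) t s α γ' x z (e2 (none, σ')) τ)
      = ∑ σ' : Equiv.Perm (Fin n), ∑ τ' : Fin n → Bool,
          IKterm (m + 1) t s α γ' x z (e2 (none, σ')) ((Fin.last n).insertNth true τ') :=
        Finset.sum_congr rfl fun σ' _ => hτsum σ'
    _ = ∑ σ' : Equiv.Perm (Fin n), ∑ τ' : Fin n → Bool,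
          ((t * z (Fin.last n) - s) *
            (∏ k ∈ Finset.Icc 1 m, (-α k + (1 - α k * γ k) * (t * z (Fin.last n)))) *
            ((∏ k ∈ Finset.Icc 1 m, (1 + γ k * (t * z (Fin.last n))⁻¹)) *
              (1 + c * (t * z (Fin.last n))⁻¹)) *
            ∏ i : Fin n, ((1 + c * (t * z i.castSucc)) * (1 + c * (t * z i.castSucc)⁻¹))) *
          IKterm m t s α γ (fun j => x j.castSucc) (fun j => z j.castSucc) σ' τ' :=
        Finset.sum_congr rfl fun σ' _ => Finset.sum_congr rfl fun τ' _ => hterm σ' τ'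
    _ = _ := by
        rw [← Finset.sum_congr rfl fun σ' (_ : σ' ∈ Finset.univ) => Finset.mul_sum _ _ _]
        rw [← Finset.mul_sum]

lemma FIIbar_eq_sum (M : ℕ) (t s : ℂ) (α γ : ℕ → ℂ) {N : ℕ} (x : Fin N → ℕ)
    (z w : Fin N → ℂ) :
    FIIbar M t s α γ x z w =
      (t ^ (N * (M - N) + N * (N + 1) / 2) * (∏ j, w j * (1 - s * z j)) *
          ∏ j, ∏ k ∈ Ioi j, (1 + t * z j * z k) * (1 + t * (z j)⁻¹ * z k)) /
        ((-1 : ℂ) ^ N * (∏ j, (1 - t ^ 2 * z j ^ 2)) *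
          ∏ j, ∏ k ∈ Ioi j, (1 - t ^ 2 * z j * z k) * (1 - (z j)⁻¹ * z k)) *
      ∑ σ : Equiv.Perm (Fin N), ∑ τ : Fin N → Bool, IKterm M t s α γ x z σ τ := rfl


/-- Izergin–Korepin recursion for the type II dual wavefunctions,
equation (92) / Proposition 6.4 Property (3): the specialization `γ_M = −(t z_N)⁻¹`
of `F̄^{II}_{M,N}` factorizes through `F̄^{II}_{M-1,N-1}`.  Here `M = m+1`, `N = n+1`, so
`F̄^{II}_{M-1,N-1}` is `FIIbar m` on the first `n` variables/positions (interpreted as `1`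
when `n = 0`, with the same `w_j`). -/
theorem FIIbar_IzerginKorepin_recursion (m n : ℕ) (hmn : n ≤ m) (t : ℂ) (ht : t ≠ 0)
    (s : ℂ) (hs : s ^ 2 = -t) (α γ : ℕ → ℂ)
    (x : Fin (n + 1) → ℕ) (hx : StrictMono x) (hx1 : ∀ j, 1 ≤ x j)
    (hxM : x (Fin.last n) = m + 1)
    (z w : Fin (n + 1) → ℂ) (hz0 : ∀ j, z j ≠ 0)
    (hz1 : ∀ j, t ^ 2 * z j ^ 2 ≠ 1)
    (hzz : ∀ j k, j < k → t ^ 2 * z j * z k ≠ 1) (hzne : ∀ j k, j < k → z j ≠ z k)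
    (hw : ∀ j, w j ^ 2 = z j) :
    FIIbar (m + 1) t s α (Function.update γ (m + 1) (-(t * z (Fin.last n))⁻¹)) x z w
      = -(s * w (Fin.last n)) *
        (∏ j, (1 + (t * z (Fin.last n) * z j)⁻¹)) *
        (∏ j : Fin n, (1 + z j.castSucc * (t * z (Fin.last n))⁻¹)) *
        (∏ j ∈ Finset.Icc 1 m, (t * (1 - α j * γ j) * z (Fin.last n) - α j)) *
        (∏ j ∈ Finset.Icc 1 m, (t + γ j * (z (Fin.last n))⁻¹)) *
        FIIbar m t s α γ (fun j : Fin n => x j.castSucc) (fun j : Fin n => z j.castSucc)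
          (fun j : Fin n => w j.castSucc) := by
  classical
  have htzL : t * z (Fin.last n) ≠ 0 := mul_ne_zero ht (hz0 _)
  rw [FIIbar_eq_sum, FIIbar_eq_sum,
    IK_sum_red m n t s ht α γ x hx hxM z hz0]
  -- nonvanishing of denominators
  have hs0 : s ≠ 0 := by
    intro h
    rw [h] at hs
    exact ht (by simpa using hs.symm)
  have hden1 : ∀ j : Fin (n + 1), (1 : ℂ) - t ^ 2 * z j ^ 2 ≠ 0 :=
    fun j => sub_ne_zero.mpr (Ne.symm (hz1 j))
  have hdend : ∀ (j k : Fin (n + 1)), j < k →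
      (1 - t ^ 2 * z j * z k) * (1 - (z j)⁻¹ * z k) ≠ 0 := by
    intro j k hjk
    refine mul_ne_zero (sub_ne_zero.mpr (Ne.symm (hzz j k hjk))) (sub_ne_zero.mpr ?_)
    intro h
    exact hzne j k hjk ((inv_mul_eq_one₀ (hz0 j)).mp h.symm)
  have hBigDen : ((-1 : ℂ) ^ (n + 1) * (∏ j, (1 - t ^ 2 * z j ^ 2)) *
      ∏ j, ∏ k ∈ Ioi j, (1 - t ^ 2 * z j * z k) * (1 - (z j)⁻¹ * z k)) ≠ 0 := by
    refine mul_ne_zero (mul_ne_zero (pow_ne_zero _ (by norm_num)) ?_) ?_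
    · exact Finset.prod_ne_zero_iff.mpr fun j _ => hden1 j
    · exact Finset.prod_ne_zero_iff.mpr fun j _ => Finset.prod_ne_zero_iff.mpr
        fun k hk => hdend j k (Finset.mem_Ioi.mp hk)
  have hSmallDen : ((-1 : ℂ) ^ n * (∏ j : Fin n, (1 - t ^ 2 * z j.castSucc ^ 2)) *
      ∏ j : Fin n, ∏ k ∈ Ioi j,
        (1 - t ^ 2 * z j.castSucc * z k.castSucc) * (1 - (z j.castSucc)⁻¹ * z k.castSucc)) ≠ 0 := by
    refine mul_ne_zero (mul_ne_zero (pow_ne_zero _ (by norm_num)) ?_) ?_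
    · exact Finset.prod_ne_zero_iff.mpr fun j _ => hden1 j.castSucc
    · exact Finset.prod_ne_zero_iff.mpr fun j _ => Finset.prod_ne_zero_iff.mpr
        fun k hk => hdend j.castSucc k.castSucc
          (Fin.castSucc_lt_castSucc_iff.mpr (Finset.mem_Ioi.mp hk))
  -- abbreviation-free endgame
  have hzL0 : z (Fin.last n) ≠ 0 := hz0 _
  -- the per-j product identity
  have hL' : (∏ j : Fin n, ((1 + t * z j.castSucc * z (Fin.last n)) *
        (1 + t * (z j.castSucc)⁻¹ * z (Fin.last n)))) *
      (∏ i : Fin n, ((1 + -(t * z (Fin.last n))⁻¹ * (t * z i.castSucc)) *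
        (1 + -(t * z (Fin.last n))⁻¹ * (t * z i.castSucc)⁻¹)))
      = (∏ j : Fin n, ((1 - t ^ 2 * z j.castSucc * z (Fin.last n)) *
          (1 - (z j.castSucc)⁻¹ * z (Fin.last n)))) *
        ((∏ j : Fin n, (1 + (t * z (Fin.last n) * z j.castSucc)⁻¹)) *
          (∏ j : Fin n, (1 + z j.castSucc * (t * z (Fin.last n))⁻¹))) := by
    rw [← Finset.prod_mul_distrib, ← Finset.prod_mul_distrib, ← Finset.prod_mul_distrib]
    refine Finset.prod_congr rfl fun j _ => ?_
    have hj : z j.castSucc ≠ 0 := hz0 _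
    have h1 : t * z (Fin.last n) ≠ 0 := htzL
    have h2 : t * z j.castSucc ≠ 0 := mul_ne_zero ht hj
    have h3 : t * z (Fin.last n) * z j.castSucc ≠ 0 := mul_ne_zero htzL hj
    simp only [mul_inv]
    field_simp
    ring
  -- the scalar head identity
  have hHead : t ^ (m + 1) * (w (Fin.last n) * (1 - s * z (Fin.last n))) *
        (t * z (Fin.last n) - s) *
        (1 + -(t * z (Fin.last n))⁻¹ * (t * z (Fin.last n))⁻¹) * (-1 : ℂ) ^ n
      = (-1 : ℂ) ^ (n + 1) * (-(s * w (Fin.last n))) *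
        (1 + (t * z (Fin.last n) * z (Fin.last n))⁻¹) *
        (1 - t ^ 2 * z (Fin.last n) ^ 2) * t ^ m := by
    have h1 : s ^ 2 * z (Fin.last n) ≠ 0 := mul_ne_zero (pow_ne_zero 2 hs0) hzL0
    rw [show t = -s ^ 2 from by linear_combination hs]
    simp only [mul_inv, neg_mul, neg_neg, inv_neg]
    field_simp
    ring
  -- γ-product conversion
  have hGr : (∏ j ∈ Finset.Icc 1 m, (t + γ j * (z (Fin.last n))⁻¹))
      = t ^ m * ∏ k ∈ Finset.Icc 1 m, (1 + γ k * (t * z (Fin.last n))⁻¹) := by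
    rw [Finset.prod_congr rfl (fun k (_ : k ∈ Finset.Icc 1 m) =>
      show t + γ k * (z (Fin.last n))⁻¹ = t * (1 + γ k * (t * z (Fin.last n))⁻¹) from
        by field_simp),
      Finset.prod_mul_distrib, Finset.prod_const, Nat.card_Icc]
    norm_num
  -- α-product conversion
  have hALr : (∏ j ∈ Finset.Icc 1 m, (t * (1 - α j * γ j) * z (Fin.last n) - α j))
      = ∏ k ∈ Finset.Icc 1 m, (-α k + (1 - α k * γ k) * (t * z (Fin.last n))) :=
    Finset.prod_congr rfl fun k _ => by ring
  rw [hALr, hGr, div_mul_eq_mul_div, div_mul_eq_mul_div, ← mul_div_assoc,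
    div_eq_div_iff hBigDen hSmallDen, exp_split hmn, pow_add,
    prod_prod_Ioi_castSucc (fun j k => (1 + t * z j * z k) * (1 + t * (z j)⁻¹ * z k)),
    prod_prod_Ioi_castSucc (fun j k => (1 - t ^ 2 * z j * z k) * (1 - (z j)⁻¹ * z k)),
    Fin.prod_univ_castSucc (f := fun j => w j * (1 - s * z j)),
    Fin.prod_univ_castSucc (f := fun j => (1 - t ^ 2 * z j ^ 2)),
    Fin.prod_univ_castSucc (f := fun j => (1 + (t * z (Fin.last n) * z j)⁻¹))]
  linear_combination
    ((t ^ (m + 1) * (w (Fin.last n) * (1 - s * z (Fin.last n))) * (t * z (Fin.last n) - s) *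
        (1 + -(t * z (Fin.last n))⁻¹ * (t * z (Fin.last n))⁻¹) * (-1 : ℂ) ^ n) *
      (t ^ (n * (m - n) + n * (n + 1) / 2) *
        (∏ j : Fin n, w j.castSucc * (1 - s * z j.castSucc)) *
        (∏ j : Fin n, ∏ k ∈ Finset.Ioi j,
          (1 + t * z j.castSucc * z k.castSucc) * (1 + t * (z j.castSucc)⁻¹ * z k.castSucc)) *
        (∏ j : Fin n, (1 - t ^ 2 * z j.castSucc ^ 2)) *
        (∏ j : Fin n, ∏ k ∈ Finset.Ioi j,
          (1 - t ^ 2 * z j.castSucc * z k.castSucc) * (1 - (z j.castSucc)⁻¹ * z k.castSucc)) *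
        (∏ k ∈ Finset.Icc 1 m, (-α k + (1 - α k * γ k) * (t * z (Fin.last n)))) *
        (∏ k ∈ Finset.Icc 1 m, (1 + γ k * (t * z (Fin.last n))⁻¹)) *
        (∑ σ : Equiv.Perm (Fin n), ∑ τ : Fin n → Bool,
          IKterm m t s α γ (fun j => x j.castSucc) (fun j => z j.castSucc) σ τ)))
      * hL'
    + (((∏ j : Fin n, ((1 - t ^ 2 * z j.castSucc * z (Fin.last n)) *
          (1 - (z j.castSucc)⁻¹ * z (Fin.last n)))) *
        ((∏ j : Fin n, (1 + (t * z (Fin.last n) * z j.castSucc)⁻¹)) *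
          (∏ j : Fin n, (1 + z j.castSucc * (t * z (Fin.last n))⁻¹)))) *
      (t ^ (n * (m - n) + n * (n + 1) / 2) *
        (∏ j : Fin n, w j.castSucc * (1 - s * z j.castSucc)) *
        (∏ j : Fin n, ∏ k ∈ Finset.Ioi j,
          (1 + t * z j.castSucc * z k.castSucc) * (1 + t * (z j.castSucc)⁻¹ * z k.castSucc)) *
        (∏ j : Fin n, (1 - t ^ 2 * z j.castSucc ^ 2)) *
        (∏ j : Fin n, ∏ k ∈ Finset.Ioi j,
          (1 - t ^ 2 * z j.castSucc * z k.castSucc) * (1 - (z j.castSucc)⁻¹ * z k.castSucc)) *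
        (∏ k ∈ Finset.Icc 1 m, (-α k + (1 - α k * γ k) * (t * z (Fin.last n)))) *
        (∏ k ∈ Finset.Icc 1 m, (1 + γ k * (t * z (Fin.last n))⁻¹)) *
        (∑ σ : Equiv.Perm (Fin n), ∑ τ : Fin n → Bool,
          IKterm m t s α γ (fun j => x j.castSucc) (fun j => z j.castSucc) σ τ)))
      * hHead
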